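/- Let d > 0, and for a real input y let n be the unique integer with y − n·d ∈ (0, d]; the stochastic quantizer Q maps y to the random output q taking value n·d with probability 1 − (y − n·d)/d and value (n+1)·d with probability (y − n·d)/d. If two inputs y, y' ∈ ℝ satisfy |y − y'| < d, then for every set τ of real numbers, |P(Q(y) ∈ τ) − P(Q(y') ∈ τ)| ≤ |y − y'|/d. -/

import Mathlib

open MeasureTheory

noncomputable def quantDist (d : ℝ) (n : ℤ) (y : ℝ) : Measure ℝ :=
  ENNReal.ofReal (1 - (y - n * d) / d) • Measure.dirac ((n : ℝ) * d)
    + ENNReal.ofReal ((y - n * d) / d) • Measure.dirac (((n : ℝ) + 1) * d)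

lemma quantDist_toReal (d : ℝ) (hd : 0 < d) (n : ℤ) (y : ℝ)
    (hn : y - n * d ∈ Set.Ioc 0 d) (τ : Set ℝ) :
    (quantDist d n y τ).toReal =
      (1 - (y - n * d) / d) * τ.indicator 1 ((n : ℝ) * d)
        + ((y - n * d) / d) * τ.indicator 1 (((n : ℝ) + 1) * d) := by
  have h1 : 0 ≤ (y - n * d) / d := le_of_lt (div_pos hn.1 hd)
  have h2 : (y - n * d) / d ≤ 1 := (div_le_one hd).mpr hn.2
  by_cases h0 : (n : ℝ) * d ∈ τ <;> by_cases hh1 : ((n : ℝ) + 1) * d ∈ τ <;>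
    simp [quantDist, Measure.dirac_apply, Set.indicator_of_mem, Set.indicator_of_notMem,
      h0, hh1, ENNReal.toReal_add, ENNReal.toReal_ofReal, h1, sub_nonneg.mpr h2]

lemma indicator_mem (τ : Set ℝ) (x : ℝ) : τ.indicator (1 : ℝ → ℝ) x = 0 ∨ τ.indicator (1 : ℝ → ℝ) x = 1 := by
  by_cases h : x ∈ τ <;> simp [h]

lemma core1 (t t' χ0 χ1 : ℝ) (ht1 : 0 ≤ t) (ht2 : t ≤ 1) (ht'1 : 0 ≤ t') (ht'2 : t' ≤ 1)
    (h0 : χ0 = 0 ∨ χ0 = 1) (h1 : χ1 = 0 ∨ χ1 = 1) :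
    |((1 - t) * χ0 + t * χ1) - ((1 - t') * χ0 + t' * χ1)| ≤ |t - t'| := by
  rcases h0 with rfl | rfl <;> rcases h1 with rfl | rfl <;>
    rw [abs_le] <;> constructor <;>
    rcases abs_cases (t - t') with ⟨h, _⟩ | ⟨h, _⟩ <;> linarith

lemma core2 (t t' χ0 χ1 χ2 : ℝ) (ht1 : 0 ≤ t) (ht2 : t ≤ 1) (ht'1 : 0 ≤ t') (ht'2 : t' ≤ 1)
    (h0 : χ0 = 0 ∨ χ0 = 1) (h1 : χ1 = 0 ∨ χ1 = 1) (h2 : χ2 = 0 ∨ χ2 = 1) :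
    |((1 - t) * χ0 + t * χ1) - ((1 - t') * χ1 + t' * χ2)| ≤ 1 + t' - t := by
  rcases h0 with rfl | rfl <;> rcases h1 with rfl | rfl <;> rcases h2 with rfl | rfl <;>
    rw [abs_le] <;> constructor <;> linarith

lemma stmt3_aux (d : ℝ) (hd : 0 < d) (y y' : ℝ) (n n' : ℤ)
    (hn : y - n * d ∈ Set.Ioc 0 d) (hn' : y' - n' * d ∈ Set.Ioc 0 d)
    (hyy' : |y - y'| < d) (hle : n ≤ n') (τ : Set ℝ) :
    |(quantDist d n y τ).toReal - (quantDist d n' y' τ).toReal| ≤ |y - y'| / d := by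
  obtain ⟨ha1, ha2⟩ := hn
  obtain ⟨hb1, hb2⟩ := hn'
  have hd' : d ≠ 0 := ne_of_gt hd
  have habs := abs_lt.mp hyy'
  have h2 : ((n' : ℝ) - n) * d < 2 * d := by nlinarith
  have h2' : (n' : ℝ) - n < 2 := by nlinarith
  have h3 : (n' : ℤ) - n < 2 := by exact_mod_cast h2'
  have hcase : n' = n ∨ n' = n + 1 := by omega
  have hyd : |y - y'| / d = |(y - y') / d| := by rw [abs_div, abs_of_pos hd]
  rw [hyd, quantDist_toReal d hd n y ⟨ha1, ha2⟩ τ, quantDist_toReal d hd n' y' ⟨hb1, hb2⟩ τ]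
  rcases hcase with rfl | rfl
  · have hq : (y - y') / d = (y - n' * d) / d - (y' - n' * d) / d := by field_simp; ring
    rw [hq]
    exact core1 _ _ _ _ (le_of_lt (div_pos ha1 hd)) ((div_le_one hd).mpr ha2)
      (le_of_lt (div_pos hb1 hd)) ((div_le_one hd).mpr hb2)
      (indicator_mem τ _) (indicator_mem τ _)
  · have e1 : ((n + 1 : ℤ) : ℝ) = (n : ℝ) + 1 := by push_cast; ring
    rw [e1]
    rw [e1] at hb1 hb2
    have e2 : ((n : ℝ) + 1 + 1) * d = ((n : ℝ) + 2) * d := by ring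
    rw [e2]
    set t := (y - n * d) / d with ht
    set t' := (y' - ((n : ℝ) + 1) * d) / d with ht'
    have hq : |(y - y') / d| = 1 + t' - t := by
      have hv : (y - y') / d = t - t' - 1 := by rw [ht, ht']; field_simp; ring
      rw [hv, abs_of_nonpos]
      · ring
      · have : 0 < t' := div_pos hb1 hd
        have : t ≤ 1 := (div_le_one hd).mpr ha2
        linarith
    rw [hq]
    exact core2 t t' _ _ _ (le_of_lt (div_pos ha1 hd)) ((div_le_one hd).mpr ha2)
      (le_of_lt (div_pos hb1 hd)) ((div_le_one hd).mpr hb2)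
      (indicator_mem τ _) (indicator_mem τ _) (indicator_mem τ _)

theorem stmt3 (d : ℝ) (hd : 0 < d) (y y' : ℝ) (n n' : ℤ)
    (hn : y - n * d ∈ Set.Ioc 0 d) (hn' : y' - n' * d ∈ Set.Ioc 0 d)
    (hyy' : |y - y'| < d) (τ : Set ℝ) :
    |(quantDist d n y τ).toReal - (quantDist d n' y' τ).toReal| ≤ |y - y'| / d := by
  rcases le_total n n' with h | h
  · exact stmt3_aux d hd y y' n n' hn hn' hyy' h τ
  · rw [abs_sub_comm, abs_sub_comm y y']
    exact stmt3_aux d hd y' y n' n hn' hn (by rwa [abs_sub_comm]) h τ
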